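/- Fix d ≥ 1, α > 0 and T > 0, and let c_j = 2^{α|j|} on the 2^d-ary tree J. Let y = (y_j)_{j∈J} and z = (z_j)_{j∈J} be two families of differentiable functions from [0, T] to [0, ∞), both satisfying the linear system y_j'(t) = −(c_j² + Σ_{k∈O_j} c_k²) y_j(t) + c_j² y_ȷ̄(t) + Σ_{k∈O_j} c_k² y_k(t) for all j ∈ J (with y_{∅̄} ≡ 0), both satisfying Σ_{j∈J} y_j(t) ≤ Σ_{j∈J} y_j(0) < ∞ for all t ∈ [0, T], and with y_j(0) = z_j(0) for all j ∈ J. Then y_j(t) = z_j(t) for all j ∈ J, t ∈ [0, T]. -/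

import Mathlib

open Set

namespace Stmt11

/-- Nodes of the `2^d`-ary tree: finite words over an alphabet with `2^d` letters.
The root is the empty word, the parent of `a :: j` is `j`, and the children of `j`
are the words `a :: j` for `a : Fin (2^d)`. -/
abbrev Word (d : ℕ) := List (Fin (2 ^ d))

/-- The coefficient `c_j = 2^(α |j|)`. -/
noncomputable def coef (α : ℝ) {d : ℕ} (j : Word d) : ℝ := (2 : ℝ) ^ (α * (j.length : ℝ))

/-- The value at the parent node, with the convention that the (fictitious) parent of the
root carries the value `f`. -/
def parentVal {d : ℕ} (f : ℝ) (X : Word d → ℝ) : Word d → ℝ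
  | [] => f
  | _ :: j => X j

/-- The right-hand side of the closed second-moment linear system associated to the
stochastic KP model: `−(c_j² + Σ_{k∈O_j} c_k²) y_j + c_j² y_ȷ̄ + Σ_{k∈O_j} c_k² y_k`,
with the convention `y_{∅̄} ≡ 0`. -/
noncomputable def linRHS {d : ℕ} (α : ℝ) (y : Word d → ℝ) (j : Word d) : ℝ :=
  -((coef α j) ^ 2 + ∑ a : Fin (2 ^ d), (coef α (a :: j)) ^ 2) * y j
    + (coef α j) ^ 2 * parentVal 0 y j
    + ∑ a : Fin (2 ^ d), (coef α (a :: j)) ^ 2 * y (a :: j)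

/-- The finset of words of length `n`. -/
def WL (d : ℕ) : ℕ → Finset (Word d)
  | 0 => {([] : Word d)}
  | n + 1 => (Finset.univ ×ˢ WL d n).image fun p : Fin (2 ^ d) × Word d => p.1 :: p.2

lemma mem_WL (d n : ℕ) (j : Word d) : j ∈ WL d n ↔ j.length = n := by
  induction n generalizing j with
  | zero => simp [WL, List.length_eq_zero_iff]
  | succ n ih =>
    simp only [WL, Finset.mem_image, Finset.mem_product, Finset.mem_univ, true_and]
    constructor
    · rintro ⟨⟨a, i⟩, hi, rfl⟩
      simp [(ih i).1 hi]
    · intro hj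
      cases j with
      | nil => simp at hj
      | cons a i => exact ⟨⟨a, i⟩, (ih i).2 (by simpa using hj), rfl⟩

lemma sum_WL_succ (d n : ℕ) (f : Word d → ℝ) :
    ∑ j ∈ WL d (n + 1), f j = ∑ a : Fin (2 ^ d), ∑ i ∈ WL d n, f (a :: i) := by
  rw [show WL d (n + 1)
      = (Finset.univ ×ˢ WL d n).image (fun p : Fin (2 ^ d) × Word d => p.1 :: p.2) from rfl,
    Finset.sum_image, Finset.sum_product]
  rintro ⟨a, i⟩ _ ⟨b, k⟩ _ h
  simpa using h

lemma linRHS_sub {d : ℕ} (α : ℝ) (Y Z : Word d → ℝ) (j : Word d) :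
    linRHS α Y j - linRHS α Z j = linRHS α (fun i => Y i - Z i) j := by
  have hp : parentVal 0 (fun i => Y i - Z i) j = parentVal 0 Y j - parentVal 0 Z j := by
    cases j <;> simp [parentVal]
  simp only [linRHS, hp, mul_sub]
  rw [Finset.sum_sub_distrib]
  ring

set_option maxHeartbeats 4000000 in
/-- Two non-negative solutions of the closed second-moment linear system
on `[0, T]`, each with total mass bounded for all times by its (finite) initial total
mass, that agree at time `0`, agree on all of `[0, T]`. -/
theorem second_moment_uniqueness (d : ℕ) (hd : 1 ≤ d) (α T : ℝ) (hα : 0 < α) (hT : 0 < T)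
    (y z : Word d → ℝ → ℝ)
    (hy_nonneg : ∀ j : Word d, ∀ t ∈ Icc (0 : ℝ) T, 0 ≤ y j t)
    (hz_nonneg : ∀ j : Word d, ∀ t ∈ Icc (0 : ℝ) T, 0 ≤ z j t)
    (hy : ∀ j : Word d, ∀ t ∈ Icc (0 : ℝ) T,
      HasDerivWithinAt (y j) (linRHS α (fun i => y i t) j) (Icc 0 T) t)
    (hz : ∀ j : Word d, ∀ t ∈ Icc (0 : ℝ) T,
      HasDerivWithinAt (z j) (linRHS α (fun i => z i t) j) (Icc 0 T) t)
    (hy0_sum : Summable fun j : Word d => y j 0)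
    (hz0_sum : Summable fun j : Word d => z j 0)
    (hy_mass : ∀ t ∈ Icc (0 : ℝ) T,
      (Summable fun j : Word d => y j t) ∧ (∑' j : Word d, y j t) ≤ ∑' j : Word d, y j 0)
    (hz_mass : ∀ t ∈ Icc (0 : ℝ) T,
      (Summable fun j : Word d => z j t) ∧ (∑' j : Word d, z j t) ≤ ∑' j : Word d, z j 0)
    (hinit : ∀ j : Word d, y j 0 = z j 0) :
    ∀ j : Word d, ∀ t ∈ Icc (0 : ℝ) T, y j t = z j t := by
  -- numerical constants
  set D : ℝ := (2 : ℝ) ^ d with hD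
  have hD1 : (1 : ℝ) < D := by
    have : (2 : ℝ) ^ 1 ≤ (2 : ℝ) ^ d := pow_le_pow_right₀ one_le_two hd
    simpa [hD] using lt_of_lt_of_le (by norm_num : (1:ℝ) < 2 ^ 1) this
  have hD0 : (0 : ℝ) < D := lt_trans one_pos hD1
  set R : ℝ := ((2 : ℝ) ^ (α : ℝ)) ^ 2 with hR
  have hR1 : (1 : ℝ) < R := by
    have h1 : (1 : ℝ) < (2 : ℝ) ^ (α : ℝ) :=
      (Real.one_lt_rpow_iff_of_pos two_pos).2 (Or.inl ⟨one_lt_two, hα⟩)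
    nlinarith
  have hR0 : (0 : ℝ) < R := lt_trans one_pos hR1
  have hden : (0 : ℝ) < 1 + D * R := by nlinarith
  set θ : ℝ := (D + R) / (1 + D * R) with hθ
  have hθ0 : 0 ≤ θ := by positivity
  have hθ1 : θ < 1 := by
    rw [hθ, div_lt_one hden]; nlinarith
  -- level energies
  set E : ℕ → ℝ := fun n => ((2 : ℝ) ^ (α * (n : ℝ))) ^ 2 with hE
  have hEpos : ∀ n, 0 < E n := fun n => by positivity
  have hEsucc : ∀ n, E (n + 1) = E n * R := by
    intro n
    have h2 : (2 : ℝ) ^ (α * ((n : ℝ) + 1)) = (2 : ℝ) ^ (α * (n : ℝ)) * (2 : ℝ) ^ (α : ℝ) := by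
      rw [← Real.rpow_add two_pos]; ring_nf
    simp only [hE, hR]
    push_cast
    rw [h2]; ring
  have hcoefsq : ∀ j : Word d, (coef α j) ^ 2 = E j.length := fun j => rfl
  have hcoefc : ∀ (a : Fin (2 ^ d)) (j : Word d), (coef α (a :: j)) ^ 2 = E (j.length + 1) := by
    intro a j
    simp only [coef, hE, List.length_cons]
  have hsum_const : ∀ j : Word d,
      (∑ a : Fin (2 ^ d), (coef α (a :: j)) ^ 2) = D * E (j.length + 1) := by
    intro j
    rw [Finset.sum_congr rfl fun a _ => hcoefc a j, Finset.sum_const, Finset.card_univ,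
      Fintype.card_fin, nsmul_eq_mul]
    push_cast [hD]
    ring
  set lamN : ℕ → ℝ := fun n => E n + D * E (n + 1) with hlamN
  have hlampos : ∀ n, 0 < lamN n := by
    intro n; have := hEpos n; have := hEpos (n + 1); simp only [hlamN]; positivity
  have hKθ : ∀ n, D * E n + E (n + 1) = θ * lamN n := by
    intro n
    have h := hEsucc n
    simp only [hlamN, hθ]
    rw [h]
    field_simp
  -- the difference
  set w : Word d → ℝ → ℝ := fun j t => y j t - z j t with hw
  have hw0 : ∀ j, w j 0 = 0 := fun j => by simp [hw, hinit j]
  have hwderiv : ∀ j, ∀ t ∈ Icc (0 : ℝ) T,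
      HasDerivWithinAt (w j) (linRHS α (fun i => w i t) j) (Icc 0 T) t := by
    intro j t ht
    have h := (hy j t ht).sub (hz j t ht)
    rw [linRHS_sub] at h
    exact h
  have hwcont : ∀ j, ContinuousOn (w j) (Icc 0 T) :=
    fun j t ht => (hwderiv j t ht).continuousWithinAt
  -- the source term
  set G : Word d → ℝ → ℝ := fun j s =>
      (coef α j) ^ 2 * parentVal 0 (fun i => w i s) j
        + ∑ a : Fin (2 ^ d), (coef α (a :: j)) ^ 2 * w (a :: j) s with hG
  have hparcont : ∀ j : Word d,
      ContinuousOn (fun s => parentVal 0 (fun i => w i s) j) (Icc 0 T) := by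
    intro j
    cases j with
    | nil => simpa [parentVal] using continuousOn_const (c := (0:ℝ)) (s := Icc (0:ℝ) T)
    | cons a i => simpa [parentVal] using hwcont i
  have hGcont : ∀ j, ContinuousOn (G j) (Icc 0 T) := by
    intro j
    apply ContinuousOn.add
    · exact continuousOn_const.mul (hparcont j)
    · exact continuousOn_finset_sum _ fun a _ => continuousOn_const.mul (hwcont _)
  have hRHSsplit : ∀ j t, linRHS α (fun i => w i t) j = -(lamN j.length) * w j t + G j t := by
    intro j t
    simp only [linRHS, hG, hlamN]
    rw [hsum_const j, hcoefsq j]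
    ring
  -- initial total mass
  set C : ℝ := (∑' j : Word d, y j 0) + ∑' j : Word d, z j 0 with hC
  have h0mem : (0 : ℝ) ∈ Icc (0 : ℝ) T := ⟨le_refl 0, hT.le⟩
  have hC0 : 0 ≤ C :=
    add_nonneg (tsum_nonneg fun j => hy_nonneg j 0 h0mem)
      (tsum_nonneg fun j => hz_nonneg j 0 h0mem)
  -- level masses
  set N : ℕ → ℝ → ℝ := fun n t => ∑ j ∈ WL d n, |w j t| with hNN
  have hNC : ∀ n, ∀ t ∈ Icc (0 : ℝ) T, N n t ≤ C := by
    intro n t ht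
    have h1 : N n t ≤ ∑ j ∈ WL d n, (y j t + z j t) := by
      apply Finset.sum_le_sum
      intro j _
      calc |w j t| ≤ |y j t| + |z j t| := abs_sub _ _
        _ = y j t + z j t := by
            rw [abs_of_nonneg (hy_nonneg j t ht), abs_of_nonneg (hz_nonneg j t ht)]
    have h2 : ∑ j ∈ WL d n, (y j t + z j t)
        = (∑ j ∈ WL d n, y j t) + ∑ j ∈ WL d n, z j t := Finset.sum_add_distrib
    have h3 : (∑ j ∈ WL d n, y j t) ≤ ∑' j : Word d, y j t :=
      Summable.sum_le_tsum _ (fun j _ => hy_nonneg j t ht) (hy_mass t ht).1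
    have h4 : (∑ j ∈ WL d n, z j t) ≤ ∑' j : Word d, z j t :=
      Summable.sum_le_tsum _ (fun j _ => hz_nonneg j t ht) (hz_mass t ht).1
    have h5 := (hy_mass t ht).2
    have h6 := (hz_mass t ht).2
    simp only [hC]
    linarith
  have hN_nonneg : ∀ n t, 0 ≤ N n t :=
    fun n t => Finset.sum_nonneg fun j _ => abs_nonneg _
  -- the key contraction estimate
  have key : ∀ C' : ℝ, 0 ≤ C' → (∀ m, ∀ s ∈ Icc (0 : ℝ) T, N m s ≤ C') →
      ∀ n, ∀ t ∈ Icc (0 : ℝ) T, N n t ≤ θ * C' := by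
    intro C' hC' hbd n t ht
    obtain ⟨ht0, htT⟩ := ht
    set lam : ℝ := lamN n with hlamdef
    have hlam0 : 0 < lam := hlampos n
    have hsub : Icc (0 : ℝ) t ⊆ Icc 0 T := Icc_subset_Icc le_rfl htT
    -- Duhamel formula for each word of length n
    have dua : ∀ j ∈ WL d n,
        w j t = Real.exp (-(lam * t)) * ∫ s in (0:ℝ)..t, Real.exp (lam * s) * G j s := by
      intro j hj
      have hjl : j.length = n := (mem_WL d n j).1 hj
      have hFcont : ContinuousOn (fun s => Real.exp (lam * s) * w j s) (Icc 0 t) :=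
        ((Real.continuous_exp.comp (continuous_const.mul continuous_id)).continuousOn).mul
          ((hwcont j).mono hsub)
      have hFd : ∀ x ∈ Ioo (0:ℝ) t,
          HasDerivWithinAt (fun s => Real.exp (lam * s) * w j s)
            (Real.exp (lam * x) * G j x) (Ioi x) x := by
        intro x hx
        have hxI : x ∈ Icc (0:ℝ) T := ⟨hx.1.le, hx.2.le.trans htT⟩
        have hmem : Icc (0:ℝ) T ∈ nhds x := Icc_mem_nhds hx.1 (lt_of_lt_of_le hx.2 htT)
        have hw' : HasDerivAt (w j) (linRHS α (fun i => w i x) j) x :=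
          (hwderiv j x hxI).hasDerivAt hmem
        have hexp : HasDerivAt (fun s : ℝ => Real.exp (lam * s))
            (Real.exp (lam * x) * lam) x := by
          simpa using ((hasDerivAt_id x).const_mul lam).exp
        have hprod := hexp.mul hw'
        have : Real.exp (lam * x) * lam * w j x
            + Real.exp (lam * x) * linRHS α (fun i => w i x) j
            = Real.exp (lam * x) * G j x := by
          rw [hRHSsplit j x, hjl]
          ring
        rw [this] at hprod
        exact hprod.hasDerivWithinAt
      have hInt : IntervalIntegrable (fun s => Real.exp (lam * s) * G j s)
          MeasureTheory.volume 0 t := by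
        apply ContinuousOn.intervalIntegrable
        rw [uIcc_of_le ht0]
        exact ((Real.continuous_exp.comp (continuous_const.mul continuous_id)).continuousOn).mul
          ((hGcont j).mono hsub)
      have hFTC := intervalIntegral.integral_eq_sub_of_hasDeriv_right_of_le ht0 hFcont hFd hInt
      rw [hw0 j] at hFTC
      have : (∫ s in (0:ℝ)..t, Real.exp (lam * s) * G j s) = Real.exp (lam * t) * w j t := by
        rw [hFTC]; ring
      rw [this, ← mul_assoc, ← Real.exp_add]
      simp
    -- sum the pointwise bounds
    have habs : ∀ j ∈ WL d n,
        |w j t| ≤ Real.exp (-(lam * t)) * ∫ s in (0:ℝ)..t, Real.exp (lam * s) * |G j s| := by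
      intro j hj
      rw [dua j hj, abs_mul, abs_of_pos (Real.exp_pos _)]
      apply mul_le_mul_of_nonneg_left _ (Real.exp_pos _).le
      calc |∫ s in (0:ℝ)..t, Real.exp (lam * s) * G j s|
          ≤ ∫ s in (0:ℝ)..t, |Real.exp (lam * s) * G j s| :=
            intervalIntegral.abs_integral_le_integral_abs ht0
        _ = ∫ s in (0:ℝ)..t, Real.exp (lam * s) * |G j s| := by
            congr 1
            ext s
            rw [abs_mul, abs_of_pos (Real.exp_pos _)]
    have hintabs : ∀ j : Word d, IntervalIntegrable
        (fun s => Real.exp (lam * s) * |G j s|) MeasureTheory.volume 0 t := by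
      intro j
      apply ContinuousOn.intervalIntegrable
      rw [uIcc_of_le ht0]
      exact ((Real.continuous_exp.comp (continuous_const.mul continuous_id)).continuousOn).mul
        (((hGcont j).mono hsub).abs)
    -- bound on the summed source
    have hGsum : ∀ s ∈ Icc (0:ℝ) T, (∑ j ∈ WL d n, |G j s|) ≤ θ * lam * C' := by
      intro s hs
      have hterm : ∀ j ∈ WL d n, |G j s|
          ≤ E n * |parentVal 0 (fun i => w i s) j| + ∑ a : Fin (2 ^ d), E (n+1) * |w (a :: j) s| := by
        intro j hj
        have hjl : j.length = n := (mem_WL d n j).1 hj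
        calc |G j s| ≤ |(coef α j) ^ 2 * parentVal 0 (fun i => w i s) j|
              + |∑ a : Fin (2 ^ d), (coef α (a :: j)) ^ 2 * w (a :: j) s| := abs_add_le _ _
          _ ≤ E n * |parentVal 0 (fun i => w i s) j|
              + ∑ a : Fin (2 ^ d), E (n+1) * |w (a :: j) s| := by
            apply add_le_add
            · rw [abs_mul, hcoefsq, hjl, abs_of_pos (hEpos n)]
            · refine (Finset.abs_sum_le_sum_abs _ _).trans ?_
              apply Finset.sum_le_sum
              intro a _
              rw [abs_mul, hcoefc, hjl, abs_of_pos (hEpos (n+1))]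
      have hsum1 : (∑ j ∈ WL d n, |G j s|)
          ≤ E n * (∑ j ∈ WL d n, |parentVal 0 (fun i => w i s) j|)
            + E (n+1) * N (n+1) s := by
        calc (∑ j ∈ WL d n, |G j s|)
            ≤ ∑ j ∈ WL d n, (E n * |parentVal 0 (fun i => w i s) j|
                + ∑ a : Fin (2 ^ d), E (n+1) * |w (a :: j) s|) := Finset.sum_le_sum hterm
          _ = E n * (∑ j ∈ WL d n, |parentVal 0 (fun i => w i s) j|)
                + E (n+1) * N (n+1) s := by
              rw [Finset.sum_add_distrib, Finset.mul_sum]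
              congr 1
              calc (∑ j ∈ WL d n, ∑ a : Fin (2 ^ d), E (n+1) * |w (a :: j) s|)
                  = ∑ a : Fin (2 ^ d), ∑ j ∈ WL d n, E (n+1) * |w (a :: j) s| :=
                    Finset.sum_comm
                _ = ∑ k ∈ WL d (n+1), E (n+1) * |w k s| :=
                    (sum_WL_succ d n fun k => E (n+1) * |w k s|).symm
                _ = E (n+1) * ∑ k ∈ WL d (n+1), |w k s| := by rw [Finset.mul_sum]
                _ = E (n+1) * N (n+1) s := rfl
      have hpar : (∑ j ∈ WL d n, |parentVal 0 (fun i => w i s) j|) ≤ D * C' := by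
        cases n with
        | zero =>
          have : (∑ j ∈ WL d 0, |parentVal 0 (fun i => w i s) j|) = 0 := by
            simp [WL, parentVal]
          rw [this]; positivity
        | succ m =>
          rw [sum_WL_succ d m (fun k => |parentVal 0 (fun i => w i s) k|)]
          have : ∀ a : Fin (2 ^ d), (∑ i ∈ WL d m, |parentVal 0 (fun i => w i s) (a :: i)|)
              = N m s := by
            intro a; rfl
          rw [Finset.sum_congr rfl fun a _ => this a, Finset.sum_const, Finset.card_univ,
            Fintype.card_fin, nsmul_eq_mul]
          have hNm : N m s ≤ C' := hbd m s hs
          have hcast : ((2 ^ d : ℕ) : ℝ) = D := by push_cast [hD]; ring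
          rw [hcast]
          exact mul_le_mul_of_nonneg_left hNm hD0.le
      have hNn1 : N (n+1) s ≤ C' := hbd (n+1) s hs
      have hEn := hEpos n
      have hEn1 := hEpos (n+1)
      calc (∑ j ∈ WL d n, |G j s|)
          ≤ E n * (D * C') + E (n+1) * C' := by
            refine hsum1.trans (add_le_add ?_ ?_)
            · exact mul_le_mul_of_nonneg_left hpar hEn.le
            · exact mul_le_mul_of_nonneg_left hNn1 hEn1.le
        _ = (D * E n + E (n+1)) * C' := by ring
        _ = θ * lam * C' := by rw [hKθ n, ← hlamdef]
    -- put everything together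
    have hstep1 : N n t ≤ Real.exp (-(lam * t))
        * ∫ s in (0:ℝ)..t, ∑ j ∈ WL d n, Real.exp (lam * s) * |G j s| := by
      rw [intervalIntegral.integral_finset_sum (μ := MeasureTheory.volume)
        (fun j _ => hintabs j), Finset.mul_sum]
      exact Finset.sum_le_sum habs
    have hstep2 : (∫ s in (0:ℝ)..t, ∑ j ∈ WL d n, Real.exp (lam * s) * |G j s|)
        ≤ ∫ s in (0:ℝ)..t, Real.exp (lam * s) * (θ * lam * C') := by
      apply intervalIntegral.integral_mono_on ht0
      · apply ContinuousOn.intervalIntegrable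
        rw [uIcc_of_le ht0]
        exact continuousOn_finset_sum _ fun j _ =>
          ((Real.continuous_exp.comp (continuous_const.mul continuous_id)).continuousOn).mul
            (((hGcont j).mono hsub).abs)
      · apply ContinuousOn.intervalIntegrable
        rw [uIcc_of_le ht0]
        exact ((Real.continuous_exp.comp (continuous_const.mul continuous_id)).continuousOn).mul
          continuousOn_const
      · intro s hs
        rw [← Finset.mul_sum]
        exact mul_le_mul_of_nonneg_left (hGsum s (hsub hs)) (Real.exp_pos _).le
    have hexpint : (∫ s in (0:ℝ)..t, Real.exp (lam * s))
        = (Real.exp (lam * t) - 1) / lam := by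
      have hder : ∀ s ∈ uIcc (0:ℝ) t,
          HasDerivAt (fun u => Real.exp (lam * u) / lam) (Real.exp (lam * s)) s := by
        intro s _
        have : HasDerivAt (fun u : ℝ => Real.exp (lam * u)) (Real.exp (lam * s) * lam) s := by
          simpa using ((hasDerivAt_id s).const_mul lam).exp
        have h2 := this.div_const lam
        simpa [mul_div_assoc, mul_div_cancel_right₀ _ hlam0.ne'] using h2
      have hint : IntervalIntegrable (fun s => Real.exp (lam * s)) MeasureTheory.volume 0 t :=
        (Real.continuous_exp.comp (continuous_const.mul continuous_id)).intervalIntegrable _ _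
      rw [intervalIntegral.integral_eq_sub_of_hasDerivAt hder hint]
      simp [sub_div]
    have hstep3 : (∫ s in (0:ℝ)..t, Real.exp (lam * s) * (θ * lam * C'))
        = θ * lam * C' * ((Real.exp (lam * t) - 1) / lam) := by
      have : (fun s => Real.exp (lam * s) * (θ * lam * C'))
          = fun s => (θ * lam * C') * Real.exp (lam * s) := by ext s; ring
      rw [this, intervalIntegral.integral_const_mul, hexpint]
    have hfinal : N n t ≤ Real.exp (-(lam * t))
        * (θ * lam * C' * ((Real.exp (lam * t) - 1) / lam)) :=
      hstep1.trans (by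
        apply mul_le_mul_of_nonneg_left _ (Real.exp_pos _).le
        rw [← hstep3]
        exact hstep2)
    have hsimp : Real.exp (-(lam * t)) * (θ * lam * C' * ((Real.exp (lam * t) - 1) / lam))
        = θ * C' * (1 - Real.exp (-(lam * t))) := by
      have hne : lam ≠ 0 := hlam0.ne'
      have h1 : Real.exp (-(lam * t)) * Real.exp (lam * t) = 1 := by
        rw [← Real.exp_add, neg_add_cancel, Real.exp_zero]
      have hre : Real.exp (-(lam * t)) * (θ * lam * C' * ((Real.exp (lam * t) - 1) / lam))
          = θ * C' * (Real.exp (-(lam * t)) * Real.exp (lam * t) - Real.exp (-(lam * t))) * (lam / lam) := by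
        ring
      rw [hre, div_self hne, h1]; ring
    rw [hsimp] at hfinal
    have hexple : Real.exp (-(lam * t)) ≤ 1 := by
      rw [Real.exp_le_one_iff]
      have : 0 ≤ lam * t := mul_nonneg hlam0.le ht0
      linarith
    have hexppos := Real.exp_pos (-(lam * t))
    nlinarith [mul_nonneg hθ0 hC']
  -- geometric decay
  have hiter : ∀ k : ℕ, ∀ n, ∀ t ∈ Icc (0 : ℝ) T, N n t ≤ θ ^ k * C := by
    intro k
    induction k with
    | zero => simpa using hNC
    | succ k ih =>
      intro n t ht
      have h := key (θ ^ k * C) (by positivity) (fun m s hs => ih m s hs) n t ht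
      calc N n t ≤ θ * (θ ^ k * C) := h
        _ = θ ^ (k + 1) * C := by ring
  -- conclusion
  intro j t ht
  have hj : j ∈ WL d j.length := (mem_WL d j.length j).2 rfl
  have h1 : |w j t| ≤ N j.length t :=
    Finset.single_le_sum (fun i _ => abs_nonneg (w i t)) hj
  have hlim : Filter.Tendsto (fun k : ℕ => θ ^ k * C) Filter.atTop (nhds 0) := by
    simpa using (tendsto_pow_atTop_nhds_zero_of_lt_one hθ0 hθ1).mul_const C
  have h2 : N j.length t ≤ 0 :=
    ge_of_tendsto' hlim fun k => hiter k j.length t ht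
  have h3 : w j t = 0 := by
    have := h1.trans h2
    have := abs_nonneg (w j t)
    exact abs_eq_zero.1 (le_antisymm (h1.trans h2) (abs_nonneg _))
  have : y j t - z j t = 0 := h3
  linarith

end Stmt11
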